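/- The first cumulant of the limiting distribution satisfies ∫_ℝ K(t,t)·exp(-a·t²) dt = -(√π/2)·(2a^{5/2} - 2√(a+1)·a² + 4a^{3/2} - 3√(a+1)·a - √(a+1)) / ((a+1)^{3/2}·a^{3/2}) for every a > 0, where K(s,t) = (st+1)·exp(-(s-t)²/2) - (2st+1)·exp(-(s²+t²)/2). -/

import Mathlib

open Real MeasureTheory Filter Topology

lemma aux_int_sq {b : ℝ} (hb : 0 < b) :
    Integrable (fun x : ℝ => x ^ 2 * Real.exp (-b * x ^ 2)) := by
  have h := integrable_rpow_mul_exp_neg_mul_sq hb (s := 2) (by norm_num)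
  have he : ∀ x : ℝ, |x| ^ (2:ℝ) = x ^ 2 := fun x => by
    rw [show (2:ℝ) = ((2:ℕ):ℝ) by norm_num, Real.rpow_natCast, sq_abs]
  simpa [he] using h

lemma aux_integral_sq {b : ℝ} (hb : 0 < b) :
    ∫ x : ℝ, x ^ 2 * Real.exp (-b * x ^ 2) = Real.sqrt (π / b) / (2 * b) := by
  have hd : ∀ x : ℝ, HasDerivAt (fun x : ℝ => x * Real.exp (-b * x ^ 2))
      (Real.exp (-b * x ^ 2) - 2 * b * (x ^ 2 * Real.exp (-b * x ^ 2))) x := by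
    intro x
    have h1 : HasDerivAt (fun x : ℝ => -b * x ^ 2) (-b * (2 * x)) x := by
      simpa using ((hasDerivAt_pow 2 x).const_mul (-b))
    have h2 := h1.exp
    have h3 := (hasDerivAt_id x).mul h2
    refine h3.congr_deriv ?_
    simp only [id_eq]
    ring
  have hf' : Integrable (fun x : ℝ =>
      Real.exp (-b * x ^ 2) - 2 * b * (x ^ 2 * Real.exp (-b * x ^ 2))) :=
    (integrable_exp_neg_mul_sq hb).sub ((aux_int_sq hb).const_mul _)
  have htc : Tendsto (fun x : ℝ => x * Real.exp (-b * x ^ 2)) (cocompact ℝ) (𝓝 0) := by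
    have h := tendsto_rpow_abs_mul_exp_neg_mul_sq_cocompact hb 1
    rw [tendsto_zero_iff_norm_tendsto_zero]
    refine h.congr fun x => ?_
    rw [Real.rpow_one, norm_mul, Real.norm_eq_abs, Real.norm_eq_abs,
      abs_of_pos (Real.exp_pos _)]
  have hbot : Tendsto (fun x : ℝ => x * Real.exp (-b * x ^ 2)) atBot (𝓝 0) :=
    htc.mono_left (by rw [cocompact_eq_atBot_atTop]; exact le_sup_left)
  have htop : Tendsto (fun x : ℝ => x * Real.exp (-b * x ^ 2)) atTop (𝓝 0) :=
    htc.mono_left (by rw [cocompact_eq_atBot_atTop]; exact le_sup_right)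
  have h0 := integral_of_hasDerivAt_of_tendsto hd hf' hbot htop
  rw [sub_zero, integral_sub (integrable_exp_neg_mul_sq hb) ((aux_int_sq hb).const_mul _),
    integral_const_mul _ _, integral_gaussian, sub_eq_zero] at h0
  field_simp at h0 ⊢
  linarith [h0]

theorem stmt_15 (a : ℝ) (ha : 0 < a) (K : ℝ → ℝ → ℝ)
    (hK : ∀ s t : ℝ, K s t = (s * t + 1) * Real.exp (-(s - t) ^ 2 / 2)
      - (2 * s * t + 1) * Real.exp (-(s ^ 2 + t ^ 2) / 2)) :
    (∫ t : ℝ, K t t * Real.exp (-a * t ^ 2))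
      = -(Real.sqrt Real.pi / 2)
        * (2 * a ^ ((5 : ℝ) / 2) - 2 * Real.sqrt (a + 1) * a ^ 2 + 4 * a ^ ((3 : ℝ) / 2)
          - 3 * Real.sqrt (a + 1) * a - Real.sqrt (a + 1))
        / ((a + 1) ^ ((3 : ℝ) / 2) * a ^ ((3 : ℝ) / 2)) := by
  have ha1 : (0:ℝ) < a + 1 := by linarith
  have heq : ∀ t : ℝ, K t t * Real.exp (-a * t ^ 2)
      = (t ^ 2 * Real.exp (-a * t ^ 2) + Real.exp (-a * t ^ 2))
        - (2 * (t ^ 2 * Real.exp (-(a+1) * t ^ 2)) + Real.exp (-(a+1) * t ^ 2)) := by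
    intro t
    have hm : Real.exp (-(t ^ 2 + t ^ 2) / 2) * Real.exp (-a * t ^ 2)
        = Real.exp (-(a+1) * t ^ 2) := by
      rw [← Real.exp_add]; ring_nf
    rw [hK, show (-(t - t) ^ 2 / 2 : ℝ) = 0 by ring, Real.exp_zero, ← hm]
    ring
  rw [MeasureTheory.integral_congr_ae (Filter.Eventually.of_forall heq)]
  have I1 : Integrable (fun t : ℝ => t ^ 2 * Real.exp (-a * t ^ 2)
      + Real.exp (-a * t ^ 2)) := (aux_int_sq ha).add (integrable_exp_neg_mul_sq ha)
  have I2 : Integrable (fun t : ℝ => 2 * (t ^ 2 * Real.exp (-(a+1) * t ^ 2))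
      + Real.exp (-(a+1) * t ^ 2)) :=
    ((aux_int_sq ha1).const_mul 2).add (integrable_exp_neg_mul_sq ha1)
  rw [integral_sub I1 I2,
    integral_add (aux_int_sq ha) (integrable_exp_neg_mul_sq ha),
    integral_add ((aux_int_sq ha1).const_mul 2) (integrable_exp_neg_mul_sq ha1),
    integral_const_mul _ _, aux_integral_sq ha, aux_integral_sq ha1,
    integral_gaussian, integral_gaussian]
  set sa := Real.sqrt a with hsa
  set sb := Real.sqrt (a+1) with hsb
  set sp := Real.sqrt π with hsp
  have hsa0 : 0 < sa := Real.sqrt_pos.mpr ha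
  have hsb0 : 0 < sb := Real.sqrt_pos.mpr ha1
  have hsa2 : sa ^ 2 = a := Real.sq_sqrt ha.le
  have hsb2 : sb ^ 2 = a + 1 := Real.sq_sqrt ha1.le
  have hda : Real.sqrt (π / a) = sp / sa := by
    rw [hsp, hsa, Real.sqrt_div Real.pi_pos.le]
  have hdb : Real.sqrt (π / (a+1)) = sp / sb := by
    rw [hsp, hsb, Real.sqrt_div Real.pi_pos.le]
  have hr32 : a ^ ((3:ℝ)/2) = sa ^ 3 := by
    rw [show (3:ℝ)/2 = (1/2 : ℝ) * ((3:ℕ):ℝ) by norm_num, Real.rpow_mul ha.le,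
      Real.rpow_natCast, hsa, Real.sqrt_eq_rpow]
  have hr52 : a ^ ((5:ℝ)/2) = sa ^ 5 := by
    rw [show (5:ℝ)/2 = (1/2 : ℝ) * ((5:ℕ):ℝ) by norm_num, Real.rpow_mul ha.le,
      Real.rpow_natCast, hsa, Real.sqrt_eq_rpow]
  have hrb32 : (a+1) ^ ((3:ℝ)/2) = sb ^ 3 := by
    rw [show (3:ℝ)/2 = (1/2 : ℝ) * ((3:ℕ):ℝ) by norm_num, Real.rpow_mul ha1.le,
      Real.rpow_natCast, hsb, Real.sqrt_eq_rpow]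
  rw [hda, hdb, hr32, hr52, hrb32, show a + 1 = sb ^ 2 from hsb2.symm,
    show a = sa ^ 2 from hsa2.symm]
  have hrel : sb ^ 2 = sa ^ 2 + 1 := by rw [hsa2, hsb2]
  have h1 : sa ≠ 0 := ne_of_gt hsa0
  have h2 : sb ≠ 0 := ne_of_gt hsb0
  field_simp
  linear_combination sp*(2*sa^2*sb + sb - 2*sa^3) * hrel
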